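/- Let α ∈ ℂ be a non-real complex number and r ∈ ℝ with r < 0. If α + conj(α) + r > 0, then 8·|α|²·r - (α + conj(α))·|α + r|² < 0. Equivalently, for the real monic cubic f with roots α, conj(α), r, the invariant L = ab - 9c is negative. -/

import Mathlib

theorem stmt9 (α : ℂ) (hα : α.im ≠ 0) (r : ℝ) (hr : r < 0)
    (hsum : 0 < 2*α.re + r) :
    8*‖α‖^2*r - (2*α.re)*‖α + (r:ℂ)‖^2 < 0 := by
  rw [Complex.sq_norm, Complex.sq_norm, Complex.normSq_apply, Complex.normSq_apply]
  simp only [Complex.add_re, Complex.add_im, Complex.ofReal_re, Complex.ofReal_im, add_zero]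
  have hq : 0 < α.im * α.im := mul_self_pos.mpr hα
  have hp : 0 < α.re := by linarith
  nlinarith [mul_pos hp hq, sq_nonneg (α.re + r), mul_nonneg hp.le (sq_nonneg (α.re + r)), mul_pos (mul_pos hp hp) (neg_pos.mpr hr), mul_pos hq (neg_pos.mpr hr)]
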